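/- Let (Y,d) be a finite ultrametric space. Then for every ε > 0 there exists a finite ultrametric space (W, ρ) with |W| = |Y| and |Sp(W)| = |W|, and a bijection Φ : W → Y such that |ρ(w₁, w₂) − d(Φ(w₁), Φ(w₂))| ≤ ε for all w₁, w₂ ∈ W. -/

import Mathlib

lemma exists_perturb (a : ℕ → ℝ) (ε : ℝ) (hε : 0 < ε) (m : ℕ) :
    ∃ b : ℕ → ℝ, (∀ k < m, a k < b k ∧ b k ≤ a k + ε) ∧ Set.InjOn b (Set.Iio m) := by
  induction m with
  | zero => exact ⟨fun _ => 0, fun k hk => absurd hk (Nat.not_lt_zero k), by simp [Set.InjOn]⟩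
  | succ m ih =>
    obtain ⟨b, hb, hinj⟩ := ih
    have hinf : (Set.Ioc (a m) (a m + ε)).Infinite := Set.Ioc_infinite (by linarith)
    have hfin : (b '' Set.Iio m).Finite := (Set.finite_Iio m).image b
    obtain ⟨v, hv⟩ := (hinf.diff hfin).nonempty
    refine ⟨Function.update b m v, ?_, ?_⟩
    · intro k hk
      rcases Nat.lt_succ_iff_lt_or_eq.mp hk with h | h
      · rw [Function.update_of_ne h.ne]; exact hb k h
      · subst h; rw [Function.update_self]; exact ⟨hv.1.1, hv.1.2⟩
    · intro x hx y hy hxy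
      simp only [Set.mem_Iio, Nat.lt_succ_iff_lt_or_eq] at hx hy
      rcases hx with hx | hx <;> rcases hy with hy | hy
      · rw [Function.update_of_ne hx.ne, Function.update_of_ne hy.ne] at hxy
        exact hinj hx hy hxy
      · subst hy; rw [Function.update_of_ne hx.ne, Function.update_self] at hxy
        exact absurd ⟨x, hx, hxy⟩ hv.2
      · subst hx; rw [Function.update_of_ne hy.ne, Function.update_self] at hxy
        exact absurd ⟨y, hy, hxy.symm⟩ hv.2
      · omega

lemma exists_compat_list {Y : Type*} [DecidableEq Y] (d : Y → Y → ℝ)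
    (hnonneg : ∀ x y, 0 ≤ d x y)
    (hsymm : ∀ x y, d x y = d y x)
    (hzero : ∀ x y, d x y = 0 ↔ x = y)
    (hultra : ∀ x y z, d x y ≤ max (d x z) (d z y)) :
    ∀ (n : ℕ) (s : Finset Y), s.card ≤ n → ∃ l : List Y, l.Nodup ∧ l.toFinset = s ∧
      ∀ (p q r : Fin l.length), (p:ℕ) ≤ q → (q:ℕ) ≤ r → d l[p] l[q] ≤ d l[p] l[r] := by
  intro n
  induction n with
  | zero =>
    intro s hs
    have : s = ∅ := Finset.card_eq_zero.mp (Nat.le_zero.mp hs)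
    exact ⟨[], List.nodup_nil, by simp [this], fun p => absurd p.2 (by simp)⟩
  | succ n ih =>
    intro s hs
    rcases s.eq_empty_or_nonempty with rfl | hne
    · exact ⟨[], List.nodup_nil, by simp, fun p => absurd p.2 (by simp)⟩
    have hprod : (s ×ˢ s).Nonempty := hne.product hne
    obtain ⟨x, hx⟩ := hne
    set D := (s ×ˢ s).sup' hprod (fun p => d p.1 p.2) with hD
    have hbound : ∀ a ∈ s, ∀ b ∈ s, d a b ≤ D := by
      intro a ha b hb
      exact Finset.le_sup' (fun p : Y × Y => d p.1 p.2)
        (show ((a, b) : Y × Y) ∈ s ×ˢ s from Finset.mem_product.mpr ⟨ha, hb⟩)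
    rcases le_or_gt D 0 with hD0 | hD0
    · -- all distances zero: s singleton
      have hsingle : s = {x} := by
        apply Finset.eq_singleton_iff_unique_mem.mpr
        refine ⟨hx, fun y hy => ?_⟩
        have h1 : d y x ≤ 0 := le_trans (hbound y hy x hx) hD0
        exact (hzero y x).mp (le_antisymm h1 (hnonneg y x))
      refine ⟨[x], List.nodup_singleton x, by simp [hsingle], ?_⟩
      intro p q r _ _
      have hq := q.2
      have hr := r.2
      simp only [List.length_singleton] at hq hr
      have : q = r := Fin.ext (by omega)
      rw [this]
    · -- split
      set s₁ := s.filter (fun y => d x y < D) with hs₁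
      set s₂ := s.filter (fun y => ¬ d x y < D) with hs₂
      have hx1 : x ∈ s₁ := by
        simp only [hs₁, Finset.mem_filter]
        exact ⟨hx, by rw [(hzero x x).mpr rfl]; exact hD0⟩
      have hmem1 : ∀ y ∈ s₁, y ∈ s ∧ d x y < D := by
        intro y hy; simpa [hs₁, Finset.mem_filter] using hy
      have hmem2 : ∀ y ∈ s₂, y ∈ s ∧ d x y = D := by
        intro y hy
        simp only [hs₂, Finset.mem_filter, not_lt] at hy
        exact ⟨hy.1, le_antisymm (hbound x hx y hy.1) hy.2⟩
      have hs2ne : s₂.Nonempty := by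
        obtain ⟨p, hp, hDp⟩ := Finset.exists_mem_eq_sup' hprod (fun p : Y × Y => d p.1 p.2)
        rw [← hD] at hDp
        obtain ⟨hp1, hp2⟩ := Finset.mem_product.mp hp
        by_cases h1 : d x p.1 < D
        · refine ⟨p.2, ?_⟩
          simp only [hs₂, Finset.mem_filter, not_lt]
          refine ⟨hp2, ?_⟩
          have hd2 : d p.1 p.2 ≤ max (d p.1 x) (d x p.2) := hultra _ _ _
          rw [← hDp] at hd2
          rcases le_max_iff.mp hd2 with h | h
          · rw [hsymm] at h; linarith
          · exact hDp ▸ hDp.symm ▸ h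
        · exact ⟨p.1, by simp only [hs₂, Finset.mem_filter]; exact ⟨hp1, h1⟩⟩
      have hcross : ∀ a ∈ s₁, ∀ c ∈ s₂, d a c = D := by
        intro a ha c hc
        obtain ⟨has, hax⟩ := hmem1 a ha
        obtain ⟨hcs, hcx⟩ := hmem2 c hc
        have h1 : d x c ≤ max (d x a) (d a c) := hultra _ _ _
        rw [hcx] at h1
        rcases le_max_iff.mp h1 with h | h
        · linarith
        · exact le_antisymm (hbound a has c hcs) h
      -- cards
      have hsub1 : s₁ ⊆ s := Finset.filter_subset _ _
      have hsub2 : s₂ ⊆ s := Finset.filter_subset _ _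
      have hdisj : ∀ y, y ∈ s₁ → y ∉ s₂ := by
        intro y h1 h2
        have := (hmem1 y h1).2; have := (hmem2 y h2).2; linarith
      obtain ⟨c, hc⟩ := hs2ne
      have hcard1 : s₁.card ≤ n := by
        have : s₁ ⊂ s := ⟨hsub1, fun hss => hdisj c (hss (hsub2 hc)) hc⟩
        have := Finset.card_lt_card this; omega
      have hcard2 : s₂.card ≤ n := by
        have : s₂ ⊂ s := ⟨hsub2, fun hss => hdisj x hx1 (hss hx)⟩
        have := Finset.card_lt_card this; omega
      obtain ⟨l₁, hnd1, htf1, hcompat1⟩ := ih s₁ hcard1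
      obtain ⟨l₂, hnd2, htf2, hcompat2⟩ := ih s₂ hcard2
      refine ⟨l₁ ++ l₂, ?_, ?_, ?_⟩
      · refine hnd1.append hnd2 ?_
        intro y hy1 hy2
        exact hdisj y (htf1 ▸ List.mem_toFinset.mpr hy1) (htf2 ▸ List.mem_toFinset.mpr hy2)
      · rw [List.toFinset_append, htf1, htf2, hs₁, hs₂,
          Finset.filter_union_filter_not_eq]
      · intro p q r hpq hqr
        have hlen : (l₁ ++ l₂).length = l₁.length + l₂.length := List.length_append
        simp only [Fin.getElem_fin] at hcompat1 hcompat2 ⊢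
        have hmemget : ∀ i : Fin (l₁ ++ l₂).length, (l₁ ++ l₂)[(i:ℕ)]'(i.2) ∈ s := by
          intro i
          have : (l₁ ++ l₂)[(i:ℕ)]'(i.2) ∈ l₁ ++ l₂ := List.getElem_mem _
          rcases List.mem_append.mp this with h | h
          · exact hsub1 (htf1 ▸ List.mem_toFinset.mpr h)
          · exact hsub2 (htf2 ▸ List.mem_toFinset.mpr h)
        by_cases hr : (r:ℕ) < l₁.length
        · have hq : (q:ℕ) < l₁.length := by omega
          have hp : (p:ℕ) < l₁.length := by omega
          rw [List.getElem_append_left hp, List.getElem_append_left hq,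
            List.getElem_append_left hr]
          exact hcompat1 ⟨p, hp⟩ ⟨q, hq⟩ ⟨r, hr⟩ hpq hqr
        · by_cases hp : l₁.length ≤ (p:ℕ)
          · have hq : l₁.length ≤ (q:ℕ) := by omega
            have hr' : l₁.length ≤ (r:ℕ) := by omega
            have hrlen : (r:ℕ) - l₁.length < l₂.length := by
              have := r.2; omega
            rw [List.getElem_append_right hp, List.getElem_append_right hq,
              List.getElem_append_right hr']
            exact hcompat2 ⟨(p:ℕ) - l₁.length, by omega⟩ ⟨(q:ℕ) - l₁.length, by omega⟩
              ⟨(r:ℕ) - l₁.length, hrlen⟩ (by simp; omega) (by simp; omega)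
          · -- p in l₁, r in l₂
            push_neg at hp
            have hr' : l₁.length ≤ (r:ℕ) := by omega
            have hpmem : (l₁ ++ l₂)[(p:ℕ)]'(p.2) ∈ s₁ := by
              rw [List.getElem_append_left hp]
              exact htf1 ▸ List.mem_toFinset.mpr (List.getElem_mem _)
            have hrmem : (l₁ ++ l₂)[(r:ℕ)]'(r.2) ∈ s₂ := by
              rw [List.getElem_append_right hr']
              exact htf2 ▸ List.mem_toFinset.mpr (List.getElem_mem _)
            rw [hcross _ hpmem _ hrmem]
            exact hbound _ (hmemget p) _ (hmemget q)


/-- Every finite ultrametric space admits, for every `ε > 0`, a bijective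
`ε`-isometry from a finite ultrametric space which is extremal for the
Gomory-Hu inequality. -/
theorem eps_isometry_from_extremal {Y : Type*} [Fintype Y]
    (d : Y → Y → ℝ)
    (hnonneg : ∀ x y, 0 ≤ d x y)
    (hsymm : ∀ x y, d x y = d y x)
    (hzero : ∀ x y, d x y = 0 ↔ x = y)
    (hultra : ∀ x y z, d x y ≤ max (d x z) (d z y))
    (ε : ℝ) (hε : 0 < ε) :
    ∃ ρ : Y → Y → ℝ,
      (∀ x y, 0 ≤ ρ x y) ∧ (∀ x y, ρ x y = ρ y x) ∧
      (∀ x y, ρ x y = 0 ↔ x = y) ∧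
      (∀ x y z, ρ x y ≤ max (ρ x z) (ρ z y)) ∧
      (Finset.univ.image (fun p : Y × Y => ρ p.1 p.2)).card = Fintype.card Y ∧
      ∃ Φ : Y ≃ Y, ∀ w₁ w₂ : Y, |ρ w₁ w₂ - d (Φ w₁) (Φ w₂)| ≤ ε := by
  classical
  set n := Fintype.card Y with hn
  rcases Nat.eq_zero_or_pos n with hn0 | hnpos
  · -- empty case
    have hY : IsEmpty Y := Fintype.card_eq_zero_iff.mp hn0
    refine ⟨d, hnonneg, hsymm, hzero, hultra, ?_, Equiv.refl Y, fun w₁ w₂ => ?_⟩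
    · have : (Finset.univ : Finset (Y × Y)) = ∅ := by
        simp [Finset.univ_eq_empty]
      rw [this, Finset.image_empty, Finset.card_empty, hn0]
    · exact (hY.false w₁).elim
  -- main case : n ≥ 1
  obtain ⟨l, hnd, htf, hcompat⟩ := exists_compat_list d hnonneg hsymm hzero hultra
    (Finset.univ : Finset Y).card (Finset.univ : Finset Y) le_rfl
  have hlen : l.length = n := by
    rw [← List.toFinset_card_of_nodup hnd, htf, hn, Finset.card_univ]
  have hYne : Nonempty Y := Fintype.card_pos_iff.mp hnpos
  obtain ⟨y₀⟩ := hYne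
  set g : ℕ → Y := fun k => l.getD k y₀ with hgdef
  set idx : Y → ℕ := fun y => l.idxOf y with hidxdef
  have hmeml : ∀ y : Y, y ∈ l := fun y => List.mem_toFinset.mp (htf ▸ Finset.mem_univ y)
  have hidx_lt : ∀ y, idx y < n := fun y => hlen ▸ List.idxOf_lt_length_iff.mpr (hmeml y)
  have hg : ∀ k (hk : k < n), g k = l[k]'(by rw [hlen]; exact hk) := by
    intro k hk
    exact List.getD_eq_getElem l y₀ (by rw [hlen]; exact hk)
  have hg_idx : ∀ y, g (idx y) = y := by
    intro y
    rw [hg (idx y) (hidx_lt y)]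
    exact List.getElem_idxOf _
  have hidx_g : ∀ k, k < n → idx (g k) = k := by
    intro k hk
    rw [hg k hk]
    exact List.Nodup.idxOf_getElem hnd k _
  have hinj_idx : ∀ x y, idx x = idx y → x = y := by
    intro x y h
    rw [← hg_idx x, ← hg_idx y, h]
  have hcompat' : ∀ i j k, i ≤ j → j ≤ k → k < n →
      d (g i) (g j) ≤ d (g i) (g k) := by
    intro i j k hij hjk hk
    have hi : i < l.length := by rw [hlen]; omega
    have hj : j < l.length := by rw [hlen]; omega
    have hk' : k < l.length := by rw [hlen]; omega
    have := hcompat ⟨i, hi⟩ ⟨j, hj⟩ ⟨k, hk'⟩ hij hjk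
    simp only [Fin.getElem_fin] at this
    rwa [hg i (by omega), hg j (by omega), hg k hk]
  set a : ℕ → ℝ := fun k => d (g k) (g (k + 1)) with hadef
  obtain ⟨b, hb, hbinj⟩ := exists_perturb a ε hε (n - 1)
  have hbpos : ∀ k, k < n - 1 → 0 < b k := by
    intro k hk
    exact lt_of_le_of_lt (hnonneg _ _) (hb k hk).1
  -- the interval formula for d
  have hdform : ∀ i j (hij : i < j), j < n →
      d (g i) (g j) = (Finset.Ico i j).sup' (Finset.nonempty_Ico.mpr hij) a := by
    intro i j hij
    induction j, hij using Nat.le_induction with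
    | base =>
      intro _
      simp [Nat.Ico_succ_singleton]
      rfl
    | succ j hj ihj =>
      intro hjn
      have hjn' : j < n := by omega
      have h1 : d (g i) (g j) ≤ d (g i) (g (j + 1)) := hcompat' i j (j + 1) (by omega) (by omega) hjn
      have h2 : a j ≤ d (g i) (g (j + 1)) := by
        have := hultra (g j) (g (j + 1)) (g i)
        rw [hsymm (g j) (g i)] at this
        calc a j ≤ max (d (g i) (g j)) (d (g i) (g (j+1))) := this
        _ = d (g i) (g (j+1)) := max_eq_right h1
      have h3 : d (g i) (g (j + 1)) = max (d (g i) (g j)) (a j) := by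
        refine le_antisymm (hultra _ _ (g j)) (max_le h1 h2)
      have hne : (Finset.Ico i j).Nonempty := Finset.nonempty_Ico.mpr (by omega)
      rw [h3, ihj hjn']
      apply le_antisymm
      · apply max_le
        · apply Finset.sup'_le
          intro m hm
          rw [Finset.mem_Ico] at hm
          exact Finset.le_sup' a (Finset.mem_Ico.mpr ⟨by omega, by omega⟩)
        · exact Finset.le_sup' a (Finset.mem_Ico.mpr ⟨by omega, by omega⟩)
      · apply Finset.sup'_le
        intro m hm
        rw [Finset.mem_Ico] at hm
        by_cases hmj : m < j
        · exact le_trans (Finset.le_sup' a (Finset.mem_Ico.mpr ⟨by omega, by omega⟩)) (le_max_left _ _)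
        · have : m = j := by omega
          subst this
          exact le_max_right _ _
  -- define ρ
  set ρ : Y → Y → ℝ := fun x y =>
    if h : x = y then 0
    else (Finset.Ico (min (idx x) (idx y)) (max (idx x) (idx y))).sup'
      (Finset.nonempty_Ico.mpr (by
        have : idx x ≠ idx y := fun e => h (hinj_idx x y e)
        omega)) b with hρdef
  have hρeq : ∀ x y (h : x ≠ y) (hne : (Finset.Ico (min (idx x) (idx y)) (max (idx x) (idx y))).Nonempty),
      ρ x y = (Finset.Ico (min (idx x) (idx y)) (max (idx x) (idx y))).sup' hne b := by
    intro x y h hne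
    simp only [hρdef, dif_neg h]
  have hIco_lt : ∀ x y, ∀ k ∈ Finset.Ico (min (idx x) (idx y)) (max (idx x) (idx y)), k < n - 1 := by
    intro x y k hk
    rw [Finset.mem_Ico] at hk
    have h1 := hidx_lt x
    have h2 := hidx_lt y
    omega
  have hρpos : ∀ x y, x ≠ y → 0 < ρ x y := by
    intro x y h
    have hne : (Finset.Ico (min (idx x) (idx y)) (max (idx x) (idx y))).Nonempty :=
      Finset.nonempty_Ico.mpr (by
        have : idx x ≠ idx y := fun e => h (hinj_idx x y e); omega)
    obtain ⟨m, hm, hsup⟩ := Finset.exists_mem_eq_sup' hne b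
    rw [hρeq x y h hne, hsup]
    exact hbpos m (hIco_lt x y m hm)
  have hρnonneg : ∀ x y, 0 ≤ ρ x y := by
    intro x y
    by_cases h : x = y
    · simp [hρdef, h]
    · exact le_of_lt (hρpos x y h)
  have hρsymm : ∀ x y, ρ x y = ρ y x := by
    intro x y
    by_cases h : x = y
    · rw [h]
    · simp only [hρdef, dif_neg h, dif_neg (Ne.symm h)]
      apply Finset.sup'_congr
      · rw [min_comm, max_comm]
      · intro _ _; rfl
  have hρzero : ∀ x y, ρ x y = 0 ↔ x = y := by
    intro x y
    constructor
    · intro h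
      by_contra hne
      exact absurd h (ne_of_gt (hρpos x y hne))
    · intro h; simp [hρdef, h]
  have hρultra : ∀ x y z, ρ x y ≤ max (ρ x z) (ρ z y) := by
    intro x y z
    by_cases hxy : x = y
    · have : ρ x y = 0 := by simp [hρdef, hxy]
      rw [this]
      exact le_trans (hρnonneg x z) (le_max_left _ _)
    by_cases hxz : x = z
    · rw [hxz]; exact le_max_right _ _
    by_cases hzy : z = y
    · rw [← hzy]; exact le_max_left _ _
    have hnexy : (Finset.Ico (min (idx x) (idx y)) (max (idx x) (idx y))).Nonempty :=
      Finset.nonempty_Ico.mpr (by have : idx x ≠ idx y := fun e => hxy (hinj_idx x y e); omega)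
    have hnexz : (Finset.Ico (min (idx x) (idx z)) (max (idx x) (idx z))).Nonempty :=
      Finset.nonempty_Ico.mpr (by have : idx x ≠ idx z := fun e => hxz (hinj_idx x z e); omega)
    have hnezy : (Finset.Ico (min (idx z) (idx y)) (max (idx z) (idx y))).Nonempty :=
      Finset.nonempty_Ico.mpr (by have : idx z ≠ idx y := fun e => hzy (hinj_idx z y e); omega)
    rw [hρeq x y hxy hnexy, hρeq x z hxz hnexz, hρeq z y hzy hnezy]
    apply Finset.sup'_le
    intro m hm
    rw [Finset.mem_Ico] at hm
    have hcases : (min (idx x) (idx z) ≤ m ∧ m < max (idx x) (idx z)) ∨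
        (min (idx z) (idx y) ≤ m ∧ m < max (idx z) (idx y)) := by omega
    rcases hcases with h | h
    · exact le_trans (Finset.le_sup' b (Finset.mem_Ico.mpr h)) (le_max_left _ _)
    · exact le_trans (Finset.le_sup' b (Finset.mem_Ico.mpr h)) (le_max_right _ _)
  -- ε-closeness
  have hclose : ∀ x y : Y, |ρ x y - d x y| ≤ ε := by
    intro x y
    by_cases h : x = y
    · have h1 : ρ x y = 0 := by simp [hρdef, h]
      have h2 : d x y = 0 := (hzero x y).mpr h
      rw [h1, h2]
      simpa using le_of_lt hε
    · set i := min (idx x) (idx y) with hi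
      set j := max (idx x) (idx y) with hj
      have hij : i < j := by
        have : idx x ≠ idx y := fun e => h (hinj_idx x y e)
        have := hidx_lt x; have := hidx_lt y
        omega
      have hjn : j < n := by have := hidx_lt x; have := hidx_lt y; omega
      have hne : (Finset.Ico i j).Nonempty := Finset.nonempty_Ico.mpr hij
      have hd : d x y = (Finset.Ico i j).sup' hne a := by
        rcases lt_or_gt_of_ne (show idx x ≠ idx y from fun e => h (hinj_idx x y e)) with hlt | hgt
        · have hi' : i = idx x := by omega
          have hj' : j = idx y := by omega
          rw [← hdform i j hij hjn, hi', hj', hg_idx, hg_idx]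
        · have hi' : i = idx y := by omega
          have hj' : j = idx x := by omega
          rw [← hdform i j hij hjn, hi', hj', hg_idx, hg_idx, hsymm]
      have hρ : ρ x y = (Finset.Ico i j).sup' hne b := hρeq x y h hne
      have hmlt : ∀ m ∈ Finset.Ico i j, m < n - 1 := by
        intro m hm; rw [Finset.mem_Ico] at hm; omega
      have hub : (Finset.Ico i j).sup' hne b ≤ (Finset.Ico i j).sup' hne a + ε := by
        apply Finset.sup'_le
        intro m hm
        calc b m ≤ a m + ε := (hb m (hmlt m hm)).2
        _ ≤ (Finset.Ico i j).sup' hne a + ε := by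
            have := Finset.le_sup' a hm
            linarith
      have hlb : (Finset.Ico i j).sup' hne a ≤ (Finset.Ico i j).sup' hne b := by
        apply Finset.sup'_le
        intro m hm
        exact le_trans (le_of_lt (hb m (hmlt m hm)).1) (Finset.le_sup' b hm)
      rw [hρ, hd]
      rw [abs_le]
      constructor <;> linarith
  -- spectrum
  have hspec : (Finset.univ.image (fun p : Y × Y => ρ p.1 p.2)) =
      insert 0 ((Finset.range (n - 1)).image b) := by
    ext t
    simp only [Finset.mem_image, Finset.mem_insert, Finset.mem_univ, true_and,
      Finset.mem_range]
    constructor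
    · rintro ⟨⟨x, y⟩, ht⟩
      by_cases h : x = y
      · left; rw [← ht]; simp [hρdef, h]
      · right
        have hne : (Finset.Ico (min (idx x) (idx y)) (max (idx x) (idx y))).Nonempty :=
          Finset.nonempty_Ico.mpr (by
            have : idx x ≠ idx y := fun e => h (hinj_idx x y e); omega)
        obtain ⟨m, hm, hsup⟩ := Finset.exists_mem_eq_sup' hne b
        refine ⟨m, hIco_lt x y m hm, ?_⟩
        rw [← ht, hρeq x y h hne, hsup]
    · rintro (rfl | ⟨k, hk, rfl⟩)
      · exact ⟨(y₀, y₀), by simp [hρdef]⟩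
      · refine ⟨(g k, g (k + 1)), ?_⟩
        have hk1 : k < n := by omega
        have hk2 : k + 1 < n := by omega
        have hne' : g k ≠ g (k + 1) := by
          intro e
          have := hidx_g k hk1
          have := hidx_g (k + 1) hk2
          rw [e] at *
          omega
        have hiq : idx (g k) = k := hidx_g k hk1
        have hjq : idx (g (k + 1)) = k + 1 := hidx_g (k + 1) hk2
        have hne2 : (Finset.Ico (min (idx (g k)) (idx (g (k+1)))) (max (idx (g k)) (idx (g (k+1))))).Nonempty := by
          rw [hiq, hjq]
          exact Finset.nonempty_Ico.mpr (by omega)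
        rw [hρeq _ _ hne' hne2]
        have hset : Finset.Ico (min (idx (g k)) (idx (g (k+1)))) (max (idx (g k)) (idx (g (k+1)))) = {k} := by
          rw [hiq, hjq, min_eq_left (by omega), max_eq_right (by omega), Nat.Ico_succ_singleton]
        rw [Finset.sup'_congr hne2 hset (fun _ _ => rfl)]
        rfl
  have hcard : (Finset.univ.image (fun p : Y × Y => ρ p.1 p.2)).card = n := by
    rw [hspec]
    have h0 : (0 : ℝ) ∉ (Finset.range (n - 1)).image b := by
      intro h
      obtain ⟨k, hk, hbk⟩ := Finset.mem_image.mp h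
      rw [Finset.mem_range] at hk
      exact absurd hbk (ne_of_gt (hbpos k hk))
    rw [Finset.card_insert_of_notMem h0, Finset.card_image_of_injOn (by
      rw [Finset.coe_range]; exact hbinj)]
    rw [Finset.card_range]
    omega
  exact ⟨ρ, hρnonneg, hρsymm, hρzero, hρultra, hcard, Equiv.refl Y, hclose⟩
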